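/- Cycle stability conjecture (matrix form): every eigenvalue of the Jacobian matrix J_n has strictly negative real part; i.e., every complex root of the characteristic polynomial of J_n has negative real part. -/

import Mathlib

open Complex Matrix

/-- The Jacobian `J_n` of the non-autocatalytic metabolic cycle with `n` metabolites
and one cofactor pair, obtained by structural kinetic modeling.  Rows and columns are
indexed by `Fin (n+1)` (so index `k : Fin (n+1)` corresponds to index `k+1` in the
1-indexed description). -/
def Jmat (n : ℕ) (θ : ℕ → ℝ) : Matrix (Fin (n + 1)) (Fin (n + 1)) ℝ :=
  Matrix.of fun i j =>
    if i.val = 0 then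
      (if j.val = 0 then -θ 1
       else if j.val = n - 1 then θ n
       else if j.val = n then -θ (n + 2) else 0)
    else if i.val = n then
      (if j.val = 0 then -θ 1
       else if j.val = n then -(θ (n + 2) + θ (n + 3)) else 0)
    else
      if j.val = i.val - 1 then θ i.val
      else if j.val = i.val then
        (if i.val = n - 1 then -(θ n + θ (n + 1)) else -θ (i.val + 1))
      else if i.val = 1 ∧ j.val = n then θ (n + 2) else 0

section Aux

lemma sum_three {m : ℕ} (f v : Fin m → ℂ) {a b c : Fin m}
    (hab : a ≠ b) (hac : a ≠ c) (hbc : b ≠ c) {p q r : ℂ}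
    (hf : ∀ j, f j = if j = a then p else if j = b then q else if j = c then r else 0) :
    ∑ j, f j * v j = p * v a + q * v b + r * v c := by
  have key : ∀ j : Fin m, f j * v j =
      (if j = a then p * v j else 0) + ((if j = b then q * v j else 0)
        + (if j = c then r * v j else 0)) := by
    intro j
    rw [hf j]
    by_cases h1 : j = a
    · subst h1; simp [hab, hac]
    · by_cases h2 : j = b
      · subst h2; simp [h1, hbc]
      · by_cases h3 : j = c
        · subst h3; simp [h1, h2]
        · simp [h1, h2, h3]
  rw [Finset.sum_congr rfl (fun j _ => key j), Finset.sum_add_distrib,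
    Finset.sum_add_distrib, Finset.sum_ite_eq' Finset.univ a (fun j => p * v j),
    Finset.sum_ite_eq' Finset.univ b (fun j => q * v j),
    Finset.sum_ite_eq' Finset.univ c (fun j => r * v j)]
  simp [add_assoc]

lemma sum_two {m : ℕ} (f v : Fin m → ℂ) {a b : Fin m}
    (hab : a ≠ b) {p q : ℂ}
    (hf : ∀ j, f j = if j = a then p else if j = b then q else 0) :
    ∑ j, f j * v j = p * v a + q * v b := by
  have key : ∀ j : Fin m, f j * v j =
      (if j = a then p * v j else 0) + (if j = b then q * v j else 0) := by
    intro j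
    rw [hf j]
    by_cases h1 : j = a
    · subst h1; simp [hab]
    · by_cases h2 : j = b
      · subst h2; simp [h1]
      · simp [h1, h2]
  rw [Finset.sum_congr rfl (fun j _ => key j), Finset.sum_add_distrib,
    Finset.sum_ite_eq' Finset.univ a (fun j => p * v j),
    Finset.sum_ite_eq' Finset.univ b (fun j => q * v j)]
  simp

lemma exists_eigenvector {m : ℕ} (N : Matrix (Fin m) (Fin m) ℂ) (μ : ℂ)
    (h : N.charpoly.IsRoot μ) : ∃ v, v ≠ 0 ∧ N.mulVec v = μ • v := by
  have hdet : (Matrix.scalar (Fin m) μ - N).det = 0 := by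
    have h' := h
    rw [Polynomial.IsRoot, Matrix.charpoly, eval_det,
      Matrix.matPolyEquiv_charmatrix, Polynomial.eval_sub, Polynomial.eval_X,
      Polynomial.eval_C] at h'
    exact h'
  obtain ⟨v, hv, hv0⟩ := (Matrix.exists_mulVec_eq_zero_iff).2 hdet
  refine ⟨v, hv, ?_⟩
  rw [Matrix.sub_mulVec] at hv0
  have h1 : (Matrix.scalar (Fin m) μ).mulVec v = μ • v := by
    ext i
    rw [Matrix.scalar_apply, Matrix.mulVec_diagonal]
    simp
  rw [h1] at hv0
  exact (sub_eq_zero.mp hv0).symm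

variable {n : ℕ}

lemma Jrow0 (hn : 3 ≤ n) (θ : ℕ → ℝ) (j : Fin (n+1)) :
    ((Jmat n θ).map (fun x : ℝ => (x : ℂ))) ⟨0, by omega⟩ j =
      if j = (⟨0, by omega⟩ : Fin (n+1)) then -(θ 1 : ℂ)
      else if j = (⟨n - 1, by omega⟩ : Fin (n+1)) then (θ n : ℂ)
      else if j = (⟨n, by omega⟩ : Fin (n+1)) then -(θ (n+2) : ℂ) else 0 := by
  obtain ⟨jv, hj⟩ := j
  simp only [Jmat, Matrix.map_apply, Matrix.of_apply, Fin.mk.injEq]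
  split_ifs
  all_goals try omega
  all_goals try (push_cast; ring)
  all_goals simp_all

lemma Jrow1 (hn : 3 ≤ n) (θ : ℕ → ℝ) (j : Fin (n+1)) :
    ((Jmat n θ).map (fun x : ℝ => (x : ℂ))) ⟨1, by omega⟩ j =
      if j = (⟨0, by omega⟩ : Fin (n+1)) then (θ 1 : ℂ)
      else if j = (⟨1, by omega⟩ : Fin (n+1)) then -(θ 2 : ℂ)
      else if j = (⟨n, by omega⟩ : Fin (n+1)) then (θ (n+2) : ℂ) else 0 := by
  obtain ⟨jv, hj⟩ := j
  simp only [Jmat, Matrix.map_apply, Matrix.of_apply, Fin.mk.injEq]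
  split_ifs
  all_goals try omega
  all_goals try (push_cast; ring)
  all_goals simp_all

lemma JrowMid (hn : 3 ≤ n) (θ : ℕ → ℝ) (k : ℕ) (hk2 : 2 ≤ k) (hk : k ≤ n - 2)
    (j : Fin (n+1)) :
    ((Jmat n θ).map (fun x : ℝ => (x : ℂ))) ⟨k, by omega⟩ j =
      if j = (⟨k - 1, by omega⟩ : Fin (n+1)) then (θ k : ℂ)
      else if j = (⟨k, by omega⟩ : Fin (n+1)) then -(θ (k+1) : ℂ) else 0 := by
  obtain ⟨jv, hj⟩ := j
  simp only [Jmat, Matrix.map_apply, Matrix.of_apply, Fin.mk.injEq]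
  split_ifs
  all_goals try omega
  all_goals try (push_cast; ring)
  all_goals simp_all

lemma JrowPen (hn : 3 ≤ n) (θ : ℕ → ℝ) (j : Fin (n+1)) :
    ((Jmat n θ).map (fun x : ℝ => (x : ℂ))) ⟨n - 1, by omega⟩ j =
      if j = (⟨n - 2, by omega⟩ : Fin (n+1)) then (θ (n-1) : ℂ)
      else if j = (⟨n - 1, by omega⟩ : Fin (n+1)) then -((θ n + θ (n+1) : ℝ) : ℂ)
      else 0 := by
  obtain ⟨jv, hj⟩ := j
  simp only [Jmat, Matrix.map_apply, Matrix.of_apply, Fin.mk.injEq]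
  split_ifs
  all_goals try omega
  all_goals try (push_cast; ring)
  all_goals simp_all

lemma JrowN (hn : 3 ≤ n) (θ : ℕ → ℝ) (j : Fin (n+1)) :
    ((Jmat n θ).map (fun x : ℝ => (x : ℂ))) ⟨n, by omega⟩ j =
      if j = (⟨0, by omega⟩ : Fin (n+1)) then -(θ 1 : ℂ)
      else if j = (⟨n, by omega⟩ : Fin (n+1)) then -((θ (n+2) + θ (n+3) : ℝ) : ℂ)
      else 0 := by
  obtain ⟨jv, hj⟩ := j
  simp only [Jmat, Matrix.map_apply, Matrix.of_apply, Fin.mk.injEq]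
  split_ifs
  all_goals try omega
  all_goals try (push_cast; ring)
  all_goals simp_all

end Aux

set_option maxHeartbeats 1000000 in
/-- Cycle stability conjecture, matrix form: every eigenvalue of the Jacobian `J_n`
(i.e. every complex root of its characteristic polynomial) has strictly negative
real part. -/
theorem cycle_stability_matrix_form (n : ℕ) (hn : 3 ≤ n) (θ : ℕ → ℝ)
    (hθ : ∀ i, 1 ≤ i → i ≤ n + 3 → 0 < θ i) :
    ∀ μ : ℂ, (((Jmat n θ).map (fun x : ℝ => (x : ℂ))).charpoly).IsRoot μ → μ.re < 0 := by
  intro μ hroot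
  by_contra hcon
  push_neg at hcon
  -- hcon : 0 ≤ μ.re
  obtain ⟨v, hvne, hv⟩ := exists_eigenvector _ μ hroot
  -- positivity facts
  have hθ1 := hθ 1 (by omega) (by omega)
  have hθ2 := hθ 2 (by omega) (by omega)
  have hθn := hθ n (by omega) (by omega)
  have hθn1 := hθ (n+1) (by omega) (by omega)
  have hθc := hθ (n+2) (by omega) (by omega)
  have hθd := hθ (n+3) (by omega) (by omega)
  have hθp := hθ (n-1) (by omega) (by omega)
  -- the vector as a function on ℕ
  set u : ℕ → ℂ := fun k => if h : k < n + 1 then v ⟨k, h⟩ else 0 with hudef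
  have hu : ∀ (k : ℕ) (h : k < n + 1), u k = v ⟨k, h⟩ := fun k h => dif_pos h
  -- |μ + t| ≥ t for t ≥ 0
  have habs : ∀ t : ℝ, 0 ≤ t → t ≤ ‖μ + (t : ℂ)‖ := by
    intro t ht
    have h1 : (μ + (t : ℂ)).re = μ.re + t := by simp
    have h2 := Complex.re_le_norm (μ + (t : ℂ))
    linarith
  -- row equations
  have mrow : ∀ i : Fin (n+1),
      ∑ j, ((Jmat n θ).map (fun x : ℝ => (x : ℂ))) i j * v j = μ * v i := by
    intro i
    have := congrFun hv i
    simpa [Matrix.mulVec, dotProduct] using this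
  have e0 : μ * u 0 = -(θ 1 : ℂ) * u 0 + (θ n : ℂ) * u (n-1) + -(θ (n+2) : ℂ) * u n := by
    have m0 := mrow ⟨0, by omega⟩
    rw [sum_three _ v (by simp only [ne_eq, Fin.mk.injEq]; omega)
      (by simp only [ne_eq, Fin.mk.injEq]; omega) (by simp only [ne_eq, Fin.mk.injEq]; omega)
      (Jrow0 hn θ)] at m0
    rw [hu 0 (by omega), hu (n-1) (by omega), hu n (by omega)]
    exact m0.symm
  have e1 : μ * u 1 = (θ 1 : ℂ) * u 0 + -(θ 2 : ℂ) * u 1 + (θ (n+2) : ℂ) * u n := by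
    have m1 := mrow ⟨1, by omega⟩
    rw [sum_three _ v (by simp only [ne_eq, Fin.mk.injEq]; omega)
      (by simp only [ne_eq, Fin.mk.injEq]; omega) (by simp only [ne_eq, Fin.mk.injEq]; omega)
      (Jrow1 hn θ)] at m1
    rw [hu 0 (by omega), hu 1 (by omega), hu n (by omega)]
    exact m1.symm
  have eMid : ∀ k, 2 ≤ k → k ≤ n - 2 →
      μ * u k = (θ k : ℂ) * u (k-1) + -(θ (k+1) : ℂ) * u k := by
    intro k hk2 hkn
    have mk := mrow ⟨k, by omega⟩
    rw [sum_two _ v (by simp only [ne_eq, Fin.mk.injEq]; omega)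
      (JrowMid hn θ k hk2 hkn)] at mk
    rw [hu k (by omega), hu (k-1) (by omega)]
    exact mk.symm
  have eP : μ * u (n-1) = (θ (n-1) : ℂ) * u (n-2) + -((θ n + θ (n+1) : ℝ) : ℂ) * u (n-1) := by
    have mp := mrow ⟨n-1, by omega⟩
    rw [sum_two _ v (by simp only [ne_eq, Fin.mk.injEq]; omega) (JrowPen hn θ)] at mp
    rw [hu (n-1) (by omega), hu (n-2) (by omega)]
    exact mp.symm
  have eN : μ * u n = -(θ 1 : ℂ) * u 0 + -((θ (n+2) + θ (n+3) : ℝ) : ℂ) * u n := by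
    have mn := mrow ⟨n, by omega⟩
    rw [sum_two _ v (by simp only [ne_eq, Fin.mk.injEq]; omega) (JrowN hn θ)] at mn
    rw [hu 0 (by omega), hu n (by omega)]
    exact mn.symm
  push_cast at eN eP
  -- derived complex equations
  have hEn' : (μ + (θ (n+2) : ℂ) + (θ (n+3) : ℂ)) * u n = -(θ 1 : ℂ) * u 0 := by
    linear_combination eN
  have h2' : (μ + (θ 2 : ℂ)) * ((μ + (θ (n+2) : ℂ) + (θ (n+3) : ℂ)) * u 1)
      = (θ 1 : ℂ) * ((μ + (θ (n+3) : ℂ)) * u 0) := by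
    linear_combination (μ + (θ (n+2) : ℂ) + (θ (n+3) : ℂ)) * e1 + (θ (n+2) : ℂ) * eN
  have h3' : ((μ + (θ 1 : ℂ)) * (μ + (θ (n+3) : ℂ)) + (θ (n+2) : ℂ) * μ) * u 0
      = (θ n : ℂ) * ((μ + (θ (n+2) : ℂ) + (θ (n+3) : ℂ)) * u (n-1)) := by
    linear_combination (μ + (θ (n+2) : ℂ) + (θ (n+3) : ℂ)) * e0 - (θ (n+2) : ℂ) * eN
  have hP' : (μ + ((θ n : ℂ) + (θ (n+1) : ℂ))) * u (n-1) = (θ (n-1) : ℂ) * u (n-2) := by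
    linear_combination eP
  -- abbreviations
  have X0n : 0 ≤ ‖u 0‖ := norm_nonneg _
  have X1n : 0 ≤ ‖u 1‖ := norm_nonneg _
  have Xpn : 0 ≤ ‖u (n-1)‖ := norm_nonneg _
  have An : 0 ≤ ‖μ + (θ (n+2) : ℂ) + (θ (n+3) : ℂ)‖ := norm_nonneg _
  have hDpos : (0:ℝ) < ‖μ + (θ (n+3) : ℂ)‖ :=
    lt_of_lt_of_le hθd (habs _ hθd.le)
  -- |μ + d| ≤ |μ + c + d|
  have hDA : ‖μ + (θ (n+3) : ℂ)‖
      ≤ ‖μ + (θ (n+2) : ℂ) + (θ (n+3) : ℂ)‖ := by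
    rw [Complex.norm_def, Complex.norm_def]
    apply Real.sqrt_le_sqrt
    simp only [Complex.normSq_apply, Complex.add_re, Complex.add_im, Complex.ofReal_re,
      Complex.ofReal_im, add_zero]
    nlinarith [hcon, hθc, hθd, sq_nonneg μ.im]
  -- key estimate : θ1 * |μ + d| ≤ |(μ+θ1)(μ+d) + cμ|
  have hKey : θ 1 * ‖μ + (θ (n+3) : ℂ)‖
      ≤ ‖(μ + (θ 1 : ℂ)) * (μ + (θ (n+3) : ℂ)) + (θ (n+2) : ℂ) * μ‖ := by
    have h1 : θ 1 * Complex.normSq (μ + (θ (n+3) : ℂ))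
        ≤ (((μ + (θ 1 : ℂ)) * (μ + (θ (n+3) : ℂ)) + (θ (n+2) : ℂ) * μ)
            * (starRingEnd ℂ) (μ + (θ (n+3) : ℂ))).re := by
      simp only [Complex.mul_re, Complex.mul_im, Complex.add_re, Complex.add_im,
        Complex.ofReal_re, Complex.ofReal_im, Complex.conj_re, Complex.conj_im,
        Complex.normSq_apply, add_zero, mul_zero, zero_mul, sub_zero]
      nlinarith [hcon, hθ1, hθc, hθd, sq_nonneg μ.im,
        mul_nonneg (mul_nonneg hcon (by linarith : (0:ℝ) ≤ μ.re + θ (n+3)))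
          (by linarith : (0:ℝ) ≤ μ.re + θ (n+2) + θ (n+3)),
        mul_nonneg (mul_self_nonneg μ.im) (by linarith : (0:ℝ) ≤ μ.re + θ (n+2))]
    have h2 : (((μ + (θ 1 : ℂ)) * (μ + (θ (n+3) : ℂ)) + (θ (n+2) : ℂ) * μ)
            * (starRingEnd ℂ) (μ + (θ (n+3) : ℂ))).re
        ≤ ‖(μ + (θ 1 : ℂ)) * (μ + (θ (n+3) : ℂ)) + (θ (n+2) : ℂ) * μ‖
            * ‖μ + (θ (n+3) : ℂ)‖ := by
      calc (((μ + (θ 1 : ℂ)) * (μ + (θ (n+3) : ℂ)) + (θ (n+2) : ℂ) * μ)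
            * (starRingEnd ℂ) (μ + (θ (n+3) : ℂ))).re
          ≤ ‖((μ + (θ 1 : ℂ)) * (μ + (θ (n+3) : ℂ)) + (θ (n+2) : ℂ) * μ)
            * (starRingEnd ℂ) (μ + (θ (n+3) : ℂ))‖ := Complex.re_le_norm _
        _ = _ := by rw [norm_mul, Complex.norm_conj]
    have h3 : θ 1 * (‖μ + (θ (n+3) : ℂ)‖ * ‖μ + (θ (n+3) : ℂ)‖)
        ≤ ‖(μ + (θ 1 : ℂ)) * (μ + (θ (n+3) : ℂ)) + (θ (n+2) : ℂ) * μ‖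
            * ‖μ + (θ (n+3) : ℂ)‖ := by
      rw [← sq, ← Complex.normSq_eq_norm_sq]
      exact h1.trans h2
    nlinarith [h3, hDpos]
  -- the chain of inequalities along the cycle
  have chain : ∀ k, 1 ≤ k → k ≤ n - 2 →
      θ (k+1) * ‖u k‖ ≤ θ 2 * ‖u 1‖ := by
    intro k hk1
    induction k, hk1 using Nat.le_induction with
    | base => intro _; exact le_refl _
    | succ k hk ih =>
      intro hk2'
      have ihk := ih (by omega)
      have e := eMid (k+1) (by omega) (by omega)
      rw [Nat.add_sub_cancel] at e
      have e' : (μ + (θ (k+2) : ℂ)) * u (k+1) = (θ (k+1) : ℂ) * u k := by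
        linear_combination e
      have hA := habs (θ (k+2)) (hθ (k+2) (by omega) (by omega)).le
      calc θ (k+1+1) * ‖u (k+1)‖
          ≤ ‖μ + (θ (k+2) : ℂ)‖ * ‖u (k+1)‖ :=
            mul_le_mul_of_nonneg_right hA (norm_nonneg _)
        _ = ‖(μ + (θ (k+2) : ℂ)) * u (k+1)‖ := (norm_mul _ _).symm
        _ = ‖(θ (k+1) : ℂ) * u k‖ := by rw [e']
        _ = θ (k+1) * ‖u k‖ := by
            rw [norm_mul, Complex.norm_real, Real.norm_eq_abs, abs_of_pos (hθ (k+1) (by omega) (by omega))]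
        _ ≤ θ 2 * ‖u 1‖ := ihk
  -- assembled inequalities
  have ia : θ (n-1) * ‖u (n-2)‖ ≤ θ 2 * ‖u 1‖ := by
    have := chain (n-2) (by omega) (by omega)
    rwa [show n-2+1 = n-1 by omega] at this
  have ib : (θ n + θ (n+1)) * ‖u (n-1)‖ ≤ θ (n-1) * ‖u (n-2)‖ := by
    have ht : (0:ℝ) ≤ θ n + θ (n+1) := by linarith
    calc (θ n + θ (n+1)) * ‖u (n-1)‖
        ≤ ‖μ + ((θ n + θ (n+1) : ℝ) : ℂ)‖ * ‖u (n-1)‖ :=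
          mul_le_mul_of_nonneg_right (habs _ ht) (norm_nonneg _)
      _ = ‖(μ + ((θ n : ℂ) + (θ (n+1) : ℂ))) * u (n-1)‖ := by
          rw [← norm_mul]; push_cast; ring_nf
      _ = ‖(θ (n-1) : ℂ) * u (n-2)‖ := by rw [hP']
      _ = θ (n-1) * ‖u (n-2)‖ := by
          rw [norm_mul, Complex.norm_real, Real.norm_eq_abs, abs_of_pos hθp]
  have ic : θ 2 * (‖μ + (θ (n+2) : ℂ) + (θ (n+3) : ℂ)‖ * ‖u 1‖)
      ≤ θ 1 * (‖μ + (θ (n+3) : ℂ)‖ * ‖u 0‖) := by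
    calc θ 2 * (‖μ + (θ (n+2) : ℂ) + (θ (n+3) : ℂ)‖ * ‖u 1‖)
        ≤ ‖μ + (θ 2 : ℂ)‖
            * (‖μ + (θ (n+2) : ℂ) + (θ (n+3) : ℂ)‖ * ‖u 1‖) :=
          mul_le_mul_of_nonneg_right (habs _ hθ2.le)
            (mul_nonneg An (norm_nonneg _))
      _ = ‖(μ + (θ 2 : ℂ)) * ((μ + (θ (n+2) : ℂ) + (θ (n+3) : ℂ)) * u 1)‖ := by
          rw [norm_mul, norm_mul]
      _ = ‖(θ 1 : ℂ) * ((μ + (θ (n+3) : ℂ)) * u 0)‖ := by rw [h2']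
      _ = θ 1 * (‖μ + (θ (n+3) : ℂ)‖ * ‖u 0‖) := by
          rw [norm_mul, norm_mul, Complex.norm_real, Real.norm_eq_abs, abs_of_pos hθ1]
  have id' : ‖(μ + (θ 1 : ℂ)) * (μ + (θ (n+3) : ℂ)) + (θ (n+2) : ℂ) * μ‖
        * ‖u 0‖
      = θ n * (‖μ + (θ (n+2) : ℂ) + (θ (n+3) : ℂ)‖ * ‖u (n-1)‖) := by
    rw [← norm_mul, h3', norm_mul, norm_mul, Complex.norm_real, Real.norm_eq_abs, abs_of_pos hθn]
  -- conclude u 0 = 0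
  have hHpos : (0:ℝ) < ‖(μ + (θ 1 : ℂ)) * (μ + (θ (n+3) : ℂ)) + (θ (n+2) : ℂ) * μ‖ :=
    lt_of_lt_of_le (by positivity) hKey
  have hX0 : ‖u 0‖ = 0 := by
    set H := ‖(μ + (θ 1 : ℂ)) * (μ + (θ (n+3) : ℂ)) + (θ (n+2) : ℂ) * μ‖ with hH
    set A := ‖μ + (θ (n+2) : ℂ) + (θ (n+3) : ℂ)‖ with hA
    set Dd := ‖μ + (θ (n+3) : ℂ)‖ with hDd
    have t1 : (θ n + θ (n+1)) * (H * ‖u 0‖)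
        = θ n * (A * ((θ n + θ (n+1)) * ‖u (n-1)‖)) := by rw [id']; ring
    have t2 : (θ n * A) * ((θ n + θ (n+1)) * ‖u (n-1)‖)
        ≤ (θ n * A) * (θ 2 * ‖u 1‖) :=
      mul_le_mul_of_nonneg_left (ib.trans ia) (mul_nonneg hθn.le An)
    have t3 : θ n * (θ 2 * (A * ‖u 1‖))
        ≤ θ n * (θ 1 * (Dd * ‖u 0‖)) :=
      mul_le_mul_of_nonneg_left ic hθn.le
    have t4 : (θ 1 * Dd) * (θ n * ‖u 0‖) ≤ H * (θ n * ‖u 0‖) :=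
      mul_le_mul_of_nonneg_right hKey (mul_nonneg hθn.le X0n)
    have tfin : θ (n+1) * (H * ‖u 0‖) ≤ 0 := by linarith [t1, t2, t3, t4]
    have : ‖u 0‖ ≤ 0 := by nlinarith [tfin, mul_pos hθn1 hHpos, X0n]
    exact le_antisymm this X0n
  have hu0 : u 0 = 0 := norm_eq_zero.mp hX0
  -- nonvanishing denominators
  have hAne : (μ + (θ (n+2) : ℂ) + (θ (n+3) : ℂ)) ≠ 0 := by
    intro hc
    have := congrArg Complex.re hc
    simp only [Complex.add_re, Complex.ofReal_re, Complex.zero_re] at this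
    linarith
  have h2ne : (μ + (θ 2 : ℂ)) ≠ 0 := by
    intro hc
    have := congrArg Complex.re hc
    simp only [Complex.add_re, Complex.ofReal_re, Complex.zero_re] at this
    linarith
  -- all components vanish
  have hun : u n = 0 := by
    have : (μ + (θ (n+2) : ℂ) + (θ (n+3) : ℂ)) * u n = 0 := by
      rw [hEn', hu0, mul_zero]
    exact (mul_eq_zero.mp this).resolve_left hAne
  have hu1 : u 1 = 0 := by
    have h0 : (μ + (θ 2 : ℂ)) * ((μ + (θ (n+2) : ℂ) + (θ (n+3) : ℂ)) * u 1) = 0 := by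
      rw [h2', hu0]; ring
    rcases mul_eq_zero.mp h0 with h | h
    · exact absurd h h2ne
    · exact (mul_eq_zero.mp h).resolve_left hAne
  have humid : ∀ k, 1 ≤ k → k ≤ n - 2 → u k = 0 := by
    intro k hk1 hk2
    have := chain k hk1 hk2
    rw [hu1] at this
    simp only [norm_zero, mul_zero] at this
    have hpos := hθ (k+1) (by omega) (by omega)
    have : ‖u k‖ = 0 := by
      have hnn := norm_nonneg (u k)
      nlinarith [this, hpos, hnn]
    exact norm_eq_zero.mp this
  have hup : u (n-1) = 0 := by
    have hm : u (n-2) = 0 := humid (n-2) (by omega) (by omega)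
    rw [hm] at ib
    simp only [norm_zero, mul_zero] at ib
    have : ‖u (n-1)‖ = 0 := by
      have hnn := norm_nonneg (u (n-1))
      nlinarith [ib, hθn, hθn1, hnn]
    exact norm_eq_zero.mp this
  -- contradiction with v ≠ 0
  apply hvne
  funext j
  obtain ⟨jv, hj⟩ := j
  have hvj : v ⟨jv, hj⟩ = u jv := (hu jv hj).symm
  simp only [Pi.zero_apply]
  rw [hvj]
  by_cases c0 : jv = 0
  · rw [c0]; exact hu0
  · by_cases cn : jv = n
    · rw [cn]; exact hun
    · by_cases cp : jv = n-1
      · rw [cp]; exact hup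
      · exact humid jv (by omega) (by omega)
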